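/- Let G be a group with a finite generating set A and word length |·|, acting by isometries on a pseudometric space (M, ρ), and let μ ∈ M. Let c > 0, let L ≥ 1 be an integer, and let B > 0 be a real number such that ρ(μ, h·μ) ≤ B for all h ∈ G with |h| ≤ L. Suppose g ∈ G satisfies ρ(μ, g·μ) ≥ c·|g|, and suppose g = g_1 g_2 ⋯ g_n with |g_j| ≤ L for all j and |g_1| + ⋯ + |g_n| = |g|. Setting h_0 = 1 and h_j = g_1 ⋯ g_j, the number of indices j ∈ {1, …, n} with ρ(h_{j−1}·μ, h_j·μ) ≥ (c/2)·|g_j| is at least c·|g| / (2B). -/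

import Mathlib

/-- The word length of `g` with respect to a generating set `A`: the smallest `n`
such that `g` is a product of `n` elements of `A ∪ A⁻¹`. -/
noncomputable def wordLength {G : Type*} [Group G] (A : Set G) (g : G) : ℕ :=
  sInf {n : ℕ | ∃ l : List G, (∀ x ∈ l, x ∈ A ∪ A⁻¹) ∧ l.length = n ∧ l.prod = g}

/-- (Inequality (E:min wins) of the paper.) Let `G`, with finite
generating set `A`, act by isometries on a pseudometric space `(M, ρ)`, and let
`μ ∈ M`. Let `c > 0`, `L ≥ 1` an integer, and `B > 0` with `ρ(μ, h·μ) ≤ B` whenever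
`|h| ≤ L`. If `ρ(μ, g·μ) ≥ c·|g|` and `g = g_1 ⋯ g_n` with `|g_j| ≤ L` for all `j`
and `|g_1| + ⋯ + |g_n| = |g|`, then, with `h_j = g_1 ⋯ g_j` (and `h_0 = 1`), the
number of indices `j` with `ρ(h_{j-1}·μ, h_j·μ) ≥ (c/2)·|g_j|` is at least
`c·|g| / (2B)`. -/
theorem linear_progress_block_count {G : Type*} [Group G]
    (A : Set G) (hAfin : A.Finite) (hAgen : Subgroup.closure A = ⊤)
    {M : Type*} [PseudoMetricSpace M] [MulAction G M]
    (hiso : ∀ (h : G) (x y : M), dist (h • x) (h • y) = dist x y)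
    (μ : M) (c : ℝ) (hc : 0 < c) (L : ℕ) (hL : 1 ≤ L)
    (B : ℝ) (hB : 0 < B)
    (hBbd : ∀ h : G, wordLength A h ≤ L → dist μ (h • μ) ≤ B)
    (g : G) (hg : c * (wordLength A g : ℝ) ≤ dist μ (g • μ))
    (n : ℕ) (gs : Fin n → G)
    (hprod : (List.ofFn gs).prod = g)
    (hblock : ∀ j : Fin n, wordLength A (gs j) ≤ L)
    (hsum : ∑ j : Fin n, wordLength A (gs j) = wordLength A g) :
    c * (wordLength A g : ℝ) / (2 * B) ≤
      ((Finset.univ.filter fun j : Fin n =>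
        (c / 2) * (wordLength A (gs j) : ℝ) ≤
          dist (((List.ofFn gs).take (j : ℕ)).prod • μ)
               (((List.ofFn gs).take ((j : ℕ) + 1)).prod • μ)).card : ℝ) := by
  classical
  set l := List.ofFn gs with hl
  have hlen : l.length = n := by simp [hl]
  set D : ℕ → ℝ := fun i =>
    dist ((l.take i).prod • μ) ((l.take (i + 1)).prod • μ) with hD
  have hdj : ∀ j : Fin n, D (j : ℕ) = dist μ (gs j • μ) := by
    intro j
    have hjlt : (j : ℕ) < l.length := by rw [hlen]; exact j.isLt
    have hsucc : (l.take ((j : ℕ) + 1)).prod = (l.take (j : ℕ)).prod * gs j := by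
      rw [List.prod_take_succ l (j : ℕ) hjlt]
      congr 1
      simp [hl]
    simp only [hD]
    rw [hsucc, mul_smul, hiso]
  have htri : dist μ (g • μ) ≤ ∑ j : Fin n, D (j : ℕ) := by
    have h0 : ((l.take 0).prod : G) • μ = μ := by simp
    have hn : ((l.take n).prod : G) • μ = g • μ := by
      rw [← hlen, List.take_length, hl, hprod]
    calc dist μ (g • μ) = dist ((l.take 0).prod • μ) ((l.take n).prod • μ) := by
          rw [h0, hn]
      _ ≤ ∑ i ∈ Finset.range n, D i :=
          dist_le_range_sum_dist (fun i => (l.take i).prod • μ) n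
      _ = ∑ j : Fin n, D (j : ℕ) := (Fin.sum_univ_eq_sum_range D n).symm
  set P : Fin n → Prop := fun j =>
    (c / 2) * (wordLength A (gs j) : ℝ) ≤ D (j : ℕ) with hP
  set S := Finset.univ.filter P with hS
  have hsplit : ∑ j : Fin n, D (j : ℕ)
      = (∑ j ∈ S, D (j : ℕ)) + ∑ j ∈ Finset.univ.filter (fun j => ¬ P j), D (j : ℕ) :=
    (Finset.sum_filter_add_sum_filter_not Finset.univ P _).symm
  have hgood : ∑ j ∈ S, D (j : ℕ) ≤ (S.card : ℝ) * B := by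
    have := Finset.sum_le_card_nsmul S (fun j => D (j : ℕ)) B
      (fun j _ => by rw [hdj j]; exact hBbd (gs j) (hblock j))
    simpa [nsmul_eq_mul] using this
  have hbad : ∑ j ∈ Finset.univ.filter (fun j => ¬ P j), D (j : ℕ)
      ≤ (c / 2) * (wordLength A g : ℝ) := by
    calc ∑ j ∈ Finset.univ.filter (fun j => ¬ P j), D (j : ℕ)
        ≤ ∑ j ∈ Finset.univ.filter (fun j => ¬ P j),
            (c / 2) * (wordLength A (gs j) : ℝ) := by
          refine Finset.sum_le_sum ?_
          intro j hj
          have := (Finset.mem_filter.mp hj).2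
          simp only [hP, not_le] at this
          exact this.le
      _ ≤ ∑ j : Fin n, (c / 2) * (wordLength A (gs j) : ℝ) := by
          refine Finset.sum_le_sum_of_subset_of_nonneg (Finset.filter_subset _ _) ?_
          intro j _ _
          positivity
      _ = (c / 2) * (wordLength A g : ℝ) := by
          rw [← Finset.mul_sum, ← Nat.cast_sum, hsum]
  have hkey : c * (wordLength A g : ℝ) ≤ (S.card : ℝ) * B + (c / 2) * (wordLength A g : ℝ) := by
    calc c * (wordLength A g : ℝ) ≤ dist μ (g • μ) := hg
      _ ≤ ∑ j : Fin n, D (j : ℕ) := htri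
      _ ≤ (S.card : ℝ) * B + (c / 2) * (wordLength A g : ℝ) := by
          rw [hsplit]; exact add_le_add hgood hbad
  have hfinal : c * (wordLength A g : ℝ) / (2 * B) ≤ (S.card : ℝ) := by
    rw [div_le_iff₀ (by positivity)]
    nlinarith [hkey]
  exact hfinal
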